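/- There exist constants c, C > 0 such that for every integer n ≥ 1 and every integer z, the simple random walk point probability satisfies the Gaussian bound √n · T(n,z) ≤ C · exp(−c·z²/n). -/

import Mathlib

open Real

/-- `T(n,z) = 2^{-n} binom(n, (n+z)/2)` when `|z| ≤ n` and `z ≡ n (mod 2)`, else `0`. -/
noncomputable def Tprob (n : ℕ) (z : ℤ) : ℝ :=
  if |z| ≤ (n : ℤ) ∧ ((n : ℤ) + z) % 2 = 0 then
    (2 : ℝ)⁻¹ ^ n * (n.choose (((n : ℤ) + z).toNat / 2) : ℝ)
  else 0


lemma cb_sqrt_bound (m : ℕ) :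
    (Nat.centralBinom m : ℝ) * Real.sqrt (2 * m + 1) ≤ 4 ^ m := by
  induction m with
  | zero => norm_num [Nat.centralBinom_zero]
  | succ m ih =>
    have hpos : (0 : ℝ) < (m : ℝ) + 1 := by positivity
    rw [← mul_le_mul_iff_right₀ hpos]
    have h1 : ((m : ℝ) + 1) * (Nat.centralBinom (m + 1) : ℝ)
        = 2 * (2 * m + 1) * (Nat.centralBinom m : ℝ) := by
      exact_mod_cast congrArg (fun k : ℕ => (k : ℝ)) (Nat.succ_mul_centralBinom_succ m)
    have a0 : (0 : ℝ) ≤ Real.sqrt (2 * m + 1) := Real.sqrt_nonneg _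
    have b0 : (0 : ℝ) ≤ Real.sqrt (2 * m + 3) := Real.sqrt_nonneg _
    have ha : Real.sqrt (2 * m + 1) ^ 2 = 2 * m + 1 := Real.sq_sqrt (by positivity)
    have hb : Real.sqrt (2 * m + 3) ^ 2 = 2 * m + 3 := Real.sq_sqrt (by positivity)
    have hab : (2 * (m : ℝ) + 1) * Real.sqrt (2 * m + 3)
        ≤ (2 * m + 2) * Real.sqrt (2 * m + 1) := by
      nlinarith [mul_nonneg a0 (sq_nonneg (Real.sqrt (2 * m + 1) - Real.sqrt (2 * m + 3))),
        mul_nonneg a0 b0, sq_nonneg (Real.sqrt (2 * m + 1) - Real.sqrt (2 * m + 3))]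
    have hcb0 : (0 : ℝ) ≤ (Nat.centralBinom m : ℝ) := Nat.cast_nonneg _
    push_cast
    rw [show (2 * ((m:ℝ) + 1) + 1) = 2 * (m:ℝ) + 3 from by ring]
    calc ((m : ℝ) + 1) * ((Nat.centralBinom (m + 1) : ℝ) * Real.sqrt (2 * (m:ℝ) + 3))
        = (2 * (2 * m + 1) * (Nat.centralBinom m : ℝ)) * Real.sqrt (2 * m + 3) := by
          rw [← mul_assoc, h1]
      _ = 2 * (Nat.centralBinom m : ℝ) * ((2 * (m:ℝ) + 1) * Real.sqrt (2 * m + 3)) := by ring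
      _ ≤ 2 * (Nat.centralBinom m : ℝ) * ((2 * (m:ℝ) + 2) * Real.sqrt (2 * m + 1)) := by
          apply mul_le_mul_of_nonneg_left hab (by positivity)
      _ = ((m:ℝ) + 1) * (4 * ((Nat.centralBinom m : ℝ) * Real.sqrt (2 * m + 1))) := by ring
      _ ≤ ((m:ℝ) + 1) * (4 * 4 ^ m) := by
          apply mul_le_mul_of_nonneg_left (by linarith) (by positivity)
      _ = ((m:ℝ) + 1) * 4 ^ (m + 1) := by ring

lemma middle_sqrt_bound (n : ℕ) (hn : 1 ≤ n) :
    (n.choose (n / 2) : ℝ) * Real.sqrt n ≤ 2 ^ n := by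
  rcases Nat.even_or_odd n with ⟨m, hm⟩ | ⟨m, hm⟩
  · subst hm
    have h2 : (m + m) / 2 = m := by omega
    have hcb : (m + m).choose m = Nat.centralBinom m := by
      unfold Nat.centralBinom; congr 1; omega
    rw [h2, hcb]
    have hs : Real.sqrt (m + m : ℕ) ≤ Real.sqrt (2 * m + 1) :=
      Real.sqrt_le_sqrt (by push_cast; linarith)
    calc (Nat.centralBinom m : ℝ) * Real.sqrt (m + m : ℕ)
        ≤ (Nat.centralBinom m : ℝ) * Real.sqrt (2 * m + 1) :=
          mul_le_mul_of_nonneg_left hs (Nat.cast_nonneg _)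
      _ ≤ 4 ^ m := cb_sqrt_bound m
      _ = 2 ^ (m + m) := by
          rw [show (4 : ℝ) = 2 ^ 2 from by norm_num, ← pow_mul]; congr 1; omega
  · subst hm
    have h2 : (2 * m + 1) / 2 = m := by omega
    rw [h2]
    rcases Nat.eq_zero_or_pos m with rfl | hm1
    · norm_num
    · obtain ⟨j, rfl⟩ : ∃ j, m = j + 1 := ⟨m - 1, by omega⟩
      have hp : (2 * (j + 1) + 1).choose (j + 1)
          = (2 * (j + 1)).choose j + (2 * (j + 1)).choose (j + 1) := by
        have := Nat.choose_succ_succ (2 * (j + 1)) j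
        simpa using this
      have hle1 : (2 * (j + 1)).choose j ≤ Nat.centralBinom (j + 1) := by
        have := Nat.choose_le_middle j (2 * (j + 1))
        rwa [show (2 * (j + 1)) / 2 = j + 1 from by omega] at this
      have hle2 : (2 * (j + 1)).choose (j + 1) = Nat.centralBinom (j + 1) := rfl
      have hle : ((2 * (j + 1) + 1).choose (j + 1) : ℝ) ≤ 2 * Nat.centralBinom (j + 1) := by
        rw [hp]; push_cast; have := (Nat.cast_le (α := ℝ)).mpr hle1; rw [hle2]; linarith
      have hs : Real.sqrt (2 * (j + 1) + 1 : ℕ) = Real.sqrt (2 * ((j:ℝ) + 1) + 1) := by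
        congr 1; push_cast; ring
      calc ((2 * (j + 1) + 1).choose (j + 1) : ℝ) * Real.sqrt (2 * (j + 1) + 1 : ℕ)
          ≤ (2 * Nat.centralBinom (j + 1)) * Real.sqrt (2 * ((j:ℝ) + 1) + 1) := by
            rw [hs]; exact mul_le_mul_of_nonneg_right hle (Real.sqrt_nonneg _)
        _ = 2 * ((Nat.centralBinom (j + 1) : ℝ) * Real.sqrt (2 * ((j:ℕ) + 1) + 1)) := by
            push_cast; ring
        _ ≤ 2 * 4 ^ (j + 1) := by
            have := cb_sqrt_bound (j + 1)
            have hc : ((2 * ((j:ℕ) + 1) + 1 : ℝ)) = 2 * ((j:ℝ) + 1) + 1 := by push_cast; ring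
            apply mul_le_mul_of_nonneg_left _ (by norm_num)
            calc (Nat.centralBinom (j + 1) : ℝ) * Real.sqrt (2 * ((j:ℕ) + 1) + 1)
                = (Nat.centralBinom (j + 1) : ℝ) * Real.sqrt (2 * ((j + 1 : ℕ):ℝ) + 1) := by
                  norm_num
              _ ≤ 4 ^ (j + 1) := cb_sqrt_bound (j + 1)
        _ = 2 ^ (2 * (j + 1) + 1) := by
            rw [show (4 : ℝ) = 2 ^ 2 from by norm_num, ← pow_mul, ← pow_succ']

lemma ratio_bound (n : ℕ) (hn : 1 ≤ n) (t : ℕ) :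
    (n.choose (n / 2 + t) : ℝ)
      ≤ (n.choose (n / 2) : ℝ) * Real.exp (-((t : ℝ) * ((t : ℝ) - 1)) / (2 * n)) := by
  have hNpos : (0 : ℝ) < n := by exact_mod_cast hn
  induction t with
  | zero => norm_num
  | succ t ih =>
    simp only [← add_assoc]
    push_cast
    by_cases h : n < n / 2 + t + 1
    · rw [Nat.choose_eq_zero_of_lt h, Nat.cast_zero]
      positivity
    · push_neg at h
      set m0 := n / 2 with hm0
      have hm0n : (m0 : ℕ) + t ≤ n := by omega
      have h1 : (n.choose (m0 + t + 1) : ℝ) * ((m0 : ℝ) + t + 1)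
          = (n.choose (m0 + t) : ℝ) * ((n : ℝ) - ((m0 : ℝ) + t)) := by
        have h2 := congrArg (fun k : ℕ => (k : ℝ)) (Nat.choose_succ_right_eq n (m0 + t))
        push_cast [Nat.cast_sub hm0n] at h2
        push_cast
        linarith [h2]
      have hfac : (n : ℝ) - ((m0 : ℝ) + t) ≤ ((m0 : ℝ) + t + 1) * Real.exp (-((t : ℝ) / n)) := by
        have e1 : 1 - (t : ℝ) / n ≤ Real.exp (-((t : ℝ) / n)) := by
          have := Real.add_one_le_exp (-((t : ℝ) / n))
          linarith
        have hn2 : (n : ℝ) ≤ 2 * m0 + 1 := by exact_mod_cast Nat.cast_le.mpr (by omega : n ≤ 2 * m0 + 1)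
        have hmn : ((m0 : ℝ) + t + 1) ≤ n := by exact_mod_cast Nat.cast_le.mpr (by omega : m0 + t + 1 ≤ n)
        have ht0 : (0 : ℝ) ≤ t := Nat.cast_nonneg _
        have key : ((m0 : ℝ) + t + 1) * ((t : ℝ) / n) ≤ t := by
          rw [mul_div_assoc', div_le_iff₀ hNpos]
          nlinarith [mul_le_mul_of_nonneg_right hmn ht0]
        have e2 : (n : ℝ) - ((m0 : ℝ) + t) ≤ ((m0 : ℝ) + t + 1) * (1 - (t : ℝ) / n) := by
          rw [mul_sub, mul_one]
          linarith [key, hn2, ht0]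
        calc (n : ℝ) - ((m0 : ℝ) + t) ≤ ((m0 : ℝ) + t + 1) * (1 - (t : ℝ) / n) := e2
          _ ≤ ((m0 : ℝ) + t + 1) * Real.exp (-((t : ℝ) / n)) :=
            mul_le_mul_of_nonneg_left e1 (by positivity)
      have hpos : (0 : ℝ) < (m0 : ℝ) + t + 1 := by positivity
      rw [← mul_le_mul_iff_left₀ hpos, h1]
      have hEE : Real.exp (-((t : ℝ) * ((t : ℝ) - 1)) / (2 * n)) * Real.exp (-((t : ℝ) / n))
          = Real.exp (-(((t : ℝ) + 1) * (((t : ℝ) + 1) - 1)) / (2 * n)) := by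
        rw [← Real.exp_add]
        congr 1
        field_simp
        ring
      have hnn : (0 : ℝ) ≤ (n : ℝ) - ((m0 : ℝ) + t) := by
        have : ((m0 : ℝ) + t) ≤ n := by exact_mod_cast Nat.cast_le.mpr hm0n
        linarith
      calc (n.choose (m0 + t) : ℝ) * ((n : ℝ) - ((m0 : ℝ) + t))
          ≤ ((n.choose m0 : ℝ) * Real.exp (-((t : ℝ) * ((t : ℝ) - 1)) / (2 * n)))
              * (((m0 : ℝ) + t + 1) * Real.exp (-((t : ℝ) / n))) :=
            mul_le_mul ih hfac hnn (by positivity)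
        _ = (n.choose m0 : ℝ)
              * (Real.exp (-((t : ℝ) * ((t : ℝ) - 1)) / (2 * n)) * Real.exp (-((t : ℝ) / n)))
              * ((m0 : ℝ) + t + 1) := by ring
        _ = (n.choose m0 : ℝ)
              * Real.exp (-(((t : ℝ) + 1) * (((t : ℝ) + 1) - 1)) / (2 * n))
              * ((m0 : ℝ) + t + 1) := by rw [hEE]

lemma Tprob_neg (n : ℕ) (z : ℤ) : Tprob n (-z) = Tprob n z := by
  unfold Tprob
  by_cases h : |z| ≤ (n : ℤ) ∧ ((n : ℤ) + z) % 2 = 0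
  · have hab := abs_le.mp h.1
    have h' : |(-z)| ≤ (n : ℤ) ∧ ((n : ℤ) + -z) % 2 = 0 := by
      refine ⟨by simpa [abs_neg] using h.1, by omega⟩
    rw [if_pos h', if_pos h]
    congr 2
    have hk : ((n : ℤ) + -z).toNat / 2 = n - ((n : ℤ) + z).toNat / 2 := by
      omega
    rw [hk, Nat.choose_symm (by omega : ((n : ℤ) + z).toNat / 2 ≤ n)]
  · rw [if_neg, if_neg h]
    intro h'
    exact h ⟨by simpa [abs_neg] using h'.1, by omega⟩

lemma main_nonneg (n : ℕ) (hn : 1 ≤ n) (z : ℤ) (hz : 0 ≤ z) :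
    Real.sqrt n * Tprob n z ≤ 2 * Real.exp (-(1/16) * (z : ℝ) ^ 2 / n) := by
  have hNpos : (0 : ℝ) < n := by exact_mod_cast hn
  unfold Tprob
  by_cases h : |z| ≤ (n : ℤ) ∧ ((n : ℤ) + z) % 2 = 0
  swap
  · rw [if_neg h, mul_zero]
    positivity
  rw [if_pos h]
  obtain ⟨h1, h2⟩ := h
  have hab := abs_le.mp h1
  set k : ℕ := ((n : ℤ) + z).toNat / 2 with hk
  obtain ⟨t, hkt⟩ : ∃ t, k = n / 2 + t := ⟨k - n / 2, by omega⟩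
  have hz2 : z ≤ 2 * (t : ℤ) := by omega
  have hZ : (z : ℝ) ≤ 2 * t := by exact_mod_cast hz2
  have hZ0 : (0 : ℝ) ≤ (z : ℝ) := by exact_mod_cast hz
  have hr := ratio_bound n hn t
  rw [← hkt] at hr
  have hmid := middle_sqrt_bound n hn
  have hfin : Real.exp (-((t : ℝ) * ((t : ℝ) - 1)) / (2 * n))
      ≤ 2 * Real.exp (-(1/16) * (z : ℝ) ^ 2 / n) := by
    rcases le_or_gt t 1 with ht | ht
    · have ht0 : (t : ℝ) * ((t : ℝ) - 1) = 0 := by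
        interval_cases t <;> norm_num
      rw [ht0, show (-(0:ℝ)/(2*(n:ℝ))) = 0 from by norm_num, Real.exp_zero]
      have hzsq : (z : ℝ) ^ 2 ≤ 4 := by nlinarith [hZ, hZ0, (by exact_mod_cast ht : (t:ℝ) ≤ 1)]
      have hge : (-(1/4) : ℝ) ≤ -(1/16) * (z : ℝ) ^ 2 / n := by
        rw [le_div_iff₀ hNpos]
        nlinarith [hzsq, hNpos, (by exact_mod_cast hn : (1:ℝ) ≤ n)]
      have := Real.add_one_le_exp (-(1/4) : ℝ)
      have hmono := Real.exp_le_exp.mpr hge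
      linarith
    · have ht2 : (2 : ℝ) ≤ t := by exact_mod_cast ht
      have hexp : -(1/16) * (z : ℝ) ^ 2 / n ≥ -((t : ℝ) * ((t : ℝ) - 1)) / (2 * n) := by
        rw [ge_iff_le, div_le_div_iff₀ (by positivity) hNpos]
        nlinarith [mul_le_mul hZ hZ hZ0 (by linarith : (0:ℝ) ≤ 2 * t), hNpos.le, ht2,
          mul_le_mul_of_nonneg_left ht2 (by linarith : (0:ℝ) ≤ (t:ℝ))]
      have := Real.exp_le_exp.mpr hexp
      have := Real.exp_pos (-(1/16) * (z : ℝ) ^ 2 / n)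
      linarith
  calc Real.sqrt n * ((2 : ℝ)⁻¹ ^ n * (n.choose k : ℝ))
      ≤ Real.sqrt n * ((2 : ℝ)⁻¹ ^ n
          * ((n.choose (n / 2) : ℝ) * Real.exp (-((t : ℝ) * ((t : ℝ) - 1)) / (2 * n)))) := by
        apply mul_le_mul_of_nonneg_left _ (Real.sqrt_nonneg _)
        exact mul_le_mul_of_nonneg_left hr (by positivity)
    _ = (2 : ℝ)⁻¹ ^ n * ((n.choose (n / 2) : ℝ) * Real.sqrt n)
          * Real.exp (-((t : ℝ) * ((t : ℝ) - 1)) / (2 * n)) := by ring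
    _ ≤ (2 : ℝ)⁻¹ ^ n * 2 ^ n * Real.exp (-((t : ℝ) * ((t : ℝ) - 1)) / (2 * n)) := by
        apply mul_le_mul_of_nonneg_right _ (Real.exp_pos _).le
        exact mul_le_mul_of_nonneg_left hmid (by positivity)
    _ = Real.exp (-((t : ℝ) * ((t : ℝ) - 1)) / (2 * n)) := by
        rw [← mul_pow]
        norm_num
    _ ≤ 2 * Real.exp (-(1/16) * (z : ℝ) ^ 2 / n) := hfin


/-- Gaussian upper bound for the simple random walk point probabilities: there are
`c, C > 0` with `√n T(n,z) ≤ C exp(-c z²/n)` for all `n ≥ 1` and all `z ∈ ℤ`. -/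
theorem Tprob_gaussian_bound :
    ∃ c C : ℝ, 0 < c ∧ 0 < C ∧ ∀ n : ℕ, 1 ≤ n → ∀ z : ℤ,
      Real.sqrt n * Tprob n z ≤ C * Real.exp (-c * (z : ℝ) ^ 2 / n) := by
  refine ⟨1/16, 2, by norm_num, by norm_num, fun n hn z => ?_⟩
  rcases le_or_gt 0 z with hz | hz
  · exact main_nonneg n hn z hz
  · have := main_nonneg n hn (-z) (by omega)
    rw [Tprob_neg] at this
    rw [Int.cast_neg, neg_sq] at this
    exact this
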